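/- If an algorithmic policy π_A is compliance-robustly fair with respect to π_H (deterministic compliance), then for every stochastic/partial compliance weight p : X × A → [0,1], the mixed policy π_C(x,a) = p(x,a)·π_A(x,a) + (1 − p(x,a))·π_H(x,a) satisfies α(π_C) ≤ α(π_H). -/

import Mathlib

open Classical Finset

noncomputable section

def groupAvg {X : Type*} [Fintype X] (P : X → Bool → ℝ) (π : X → Bool → ℝ) (a : Bool) : ℝ :=
  ∑ x, π x a * P x a

def unfairness {X : Type*} [Fintype X] (P : X → Bool → ℝ) (π : X → Bool → ℝ) : ℝ :=
  |groupAvg P π true - groupAvg P π false|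

def combine {X : Type*} (πA πH : X → Bool → ℝ) (c : X → Bool → Bool) : X → Bool → ℝ :=
  fun x a => if c x a then πA x a else πH x a

theorem stmt3
    {X : Type*} [Fintype X] [Nonempty X] (P : X → Bool → ℝ)
    (hP : ∀ x a, 0 < P x a) (hPsum : ∀ a, ∑ x, P x a = 1)
    (πH πA : X → Bool → ℝ)
    (hπH : ∀ x a, 0 ≤ πH x a ∧ πH x a ≤ 1) (hπA : ∀ x a, 0 ≤ πA x a ∧ πA x a ≤ 1)
    (hord : groupAvg P πH false ≤ groupAvg P πH true)
    (hrobust : ∀ c : X → Bool → Bool, unfairness P (combine πA πH c) ≤ unfairness P πH) :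
    ∀ p : X → Bool → ℝ, (∀ x a, 0 ≤ p x a ∧ p x a ≤ 1) →
      unfairness P (fun x a => p x a * πA x a + (1 - p x a) * πH x a) ≤ unfairness P πH := by
  intro p hp
  classical
  set Δ : X → Bool → ℝ := fun x a => πA x a - πH x a with hΔ
  -- groupAvg of a mixed policy
  have havg : ∀ (q : X → Bool → ℝ) (a : Bool),
      groupAvg P (fun x a => q x a * πA x a + (1 - q x a) * πH x a) a
        = groupAvg P πH a + ∑ x, q x a * Δ x a * P x a := by
    intro q a
    simp only [groupAvg, hΔ]
    rw [← Finset.sum_add_distrib]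
    exact Finset.sum_congr rfl (fun x _ => by ring)
  -- combine is a mixed policy with indicator weights
  have hcomb : ∀ c : X → Bool → Bool,
      combine πA πH c
        = fun x a => (if c x a then (1:ℝ) else 0) * πA x a
            + (1 - (if c x a then (1:ℝ) else 0)) * πH x a := by
    intro c
    funext x a
    by_cases h : c x a <;> simp [combine, h]
  -- the gap as a function of weights
  have hgap : ∀ (q : X → Bool → ℝ),
      groupAvg P (fun x a => q x a * πA x a + (1 - q x a) * πH x a) true
        - groupAvg P (fun x a => q x a * πA x a + (1 - q x a) * πH x a) false
      = (groupAvg P πH true - groupAvg P πH false)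
        + (∑ x, q x true * Δ x true * P x true)
        - (∑ x, q x false * Δ x false * P x false) := by
    intro q
    rw [havg q true, havg q false]; ring
  -- upper deterministic compliance
  set cU : X → Bool → Bool := fun x a => if a then decide (0 ≤ Δ x a) else decide (Δ x a ≤ 0)
    with hcU
  set cL : X → Bool → Bool := fun x a => if a then decide (Δ x a ≤ 0) else decide (0 ≤ Δ x a)
    with hcL
  set qU : X → Bool → ℝ := fun x a => if cU x a then (1:ℝ) else 0 with hqU
  set qL : X → Bool → ℝ := fun x a => if cL x a then (1:ℝ) else 0 with hqL
  have hUtrue : ∑ x, p x true * Δ x true * P x true ≤ ∑ x, qU x true * Δ x true * P x true := by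
    apply Finset.sum_le_sum
    intro x _
    have hpx := hp x true
    have hPx := hP x true
    simp only [hqU, hcU, if_pos rfl]
    by_cases h : 0 ≤ Δ x true
    · simp only [h, decide_true, if_pos]
      nlinarith [mul_nonneg (mul_nonneg (sub_nonneg.2 hpx.2) h) hPx.le]
    · push_neg at h; simp only [h.not_ge, decide_false]; simp
      nlinarith [mul_nonpos_of_nonpos_of_nonneg h.le (mul_nonneg hpx.1 hPx.le)]
  have hUfalse : ∑ x, qU x false * Δ x false * P x false ≤ ∑ x, p x false * Δ x false * P x false := by
    apply Finset.sum_le_sum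
    intro x _
    have hpx := hp x false
    have hPx := hP x false
    simp only [hqU, hcU, if_neg (by simp : ¬(false = true))]
    by_cases h : Δ x false ≤ 0
    · simp only [h, decide_true, if_pos]
      nlinarith [mul_nonpos_of_nonpos_of_nonneg (mul_nonpos_of_nonneg_of_nonpos (sub_nonneg.2 hpx.2) h) hPx.le]
    · push_neg at h; simp only [h.not_ge, decide_false]; simp
      nlinarith [mul_nonneg (mul_nonneg hpx.1 h.le) hPx.le]
  have hLtrue : ∑ x, qL x true * Δ x true * P x true ≤ ∑ x, p x true * Δ x true * P x true := by
    apply Finset.sum_le_sum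
    intro x _
    have hpx := hp x true
    have hPx := hP x true
    simp only [hqL, hcL, if_pos rfl]
    by_cases h : Δ x true ≤ 0
    · simp only [h, decide_true, if_pos]
      nlinarith [mul_nonpos_of_nonpos_of_nonneg (mul_nonpos_of_nonneg_of_nonpos (sub_nonneg.2 hpx.2) h) hPx.le]
    · push_neg at h; simp only [h.not_ge, decide_false]; simp
      nlinarith [mul_nonneg (mul_nonneg hpx.1 h.le) hPx.le]
  have hLfalse : ∑ x, p x false * Δ x false * P x false ≤ ∑ x, qL x false * Δ x false * P x false := by
    apply Finset.sum_le_sum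
    intro x _
    have hpx := hp x false
    have hPx := hP x false
    simp only [hqL, hcL, if_neg (by simp : ¬(false = true))]
    by_cases h : 0 ≤ Δ x false
    · simp only [h, decide_true, if_pos]
      nlinarith [mul_nonneg (mul_nonneg (sub_nonneg.2 hpx.2) h) hPx.le]
    · push_neg at h; simp only [h.not_ge, decide_false]; simp
      nlinarith [mul_nonpos_of_nonpos_of_nonneg h.le (mul_nonneg hpx.1 hPx.le)]
  -- deterministic gaps are bounded
  have hU :
      groupAvg P (fun x a => qU x a * πA x a + (1 - qU x a) * πH x a) true
        - groupAvg P (fun x a => qU x a * πA x a + (1 - qU x a) * πH x a) false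
      ≤ unfairness P πH := by
    have := hrobust cU
    rw [hcomb cU] at this
    calc _ ≤ unfairness P (fun x a => qU x a * πA x a + (1 - qU x a) * πH x a) :=
          le_abs_self _
      _ ≤ unfairness P πH := this
  have hL :
      -(unfairness P πH)
      ≤ groupAvg P (fun x a => qL x a * πA x a + (1 - qL x a) * πH x a) true
        - groupAvg P (fun x a => qL x a * πA x a + (1 - qL x a) * πH x a) false := by
    have := hrobust cL
    rw [hcomb cL] at this
    calc -(unfairness P πH)
        ≤ -(unfairness P (fun x a => qL x a * πA x a + (1 - qL x a) * πH x a)) := by linarith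
      _ ≤ _ := neg_abs_le _
  rw [unfairness, abs_le]
  constructor
  · rw [hgap p]
    rw [hgap qL] at hL
    linarith
  · rw [hgap p]
    rw [hgap qU] at hU
    linarith

end
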